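/- Let H be a separable complex Hilbert space and let P be a bounded idempotent operator on H. Then P + P* - I is invertible and (2P - I)|2P - I|⁻¹ = (P + P* - I)|P + P* - I|⁻¹. -/

import Mathlib

open ContinuousLinearMap

open Polynomial in
lemma commute_cfc_of_commute {A : Type*} [CStarAlgebra A] {a b : A}
    (ha : IsSelfAdjoint a) (hab : Commute a b) (f : ℝ → ℝ) : Commute (cfc f a) b := by
  by_cases hf : ContinuousOn f (spectrum ℝ a)
  · rw [cfc_apply f a ha hf]
    suffices H : ∀ g : C(spectrum ℝ a, ℝ), Commute (cfcHom ha g) b from H _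
    intro g
    let T : Subalgebra ℝ C(spectrum ℝ a, ℝ) :=
      (Subalgebra.centralizer ℝ {b}).comap (cfcHom ha : C(spectrum ℝ a, ℝ) →⋆ₐ[ℝ] A).toAlgHom
    have hmemT : ∀ h : C(spectrum ℝ a, ℝ), h ∈ T ↔ Commute (cfcHom ha h) b := by
      intro h
      rw [Subalgebra.mem_comap, Subalgebra.mem_centralizer_iff]
      constructor
      · intro hh; exact (hh b rfl).symm
      · rintro hh c rfl; exact hh.symm
    have hXT : (toContinuousMapOnAlgHom (spectrum ℝ a) X) ∈ T := by
      rw [hmemT]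
      have : (toContinuousMapOnAlgHom (spectrum ℝ a) X)
          = (ContinuousMap.id ℝ).restrict (spectrum ℝ a) := by
        ext x; simp
      rw [this, cfcHom_id ha]
      exact hab
    have hpoly : polynomialFunctions (spectrum ℝ a) ≤ T := by
      rw [polynomialFunctions.eq_adjoin_X]
      exact Algebra.adjoin_le (by rintro x ⟨rfl⟩; exact hXT)
    have hT_closed : IsClosed (T : Set C(spectrum ℝ a, ℝ)) := by
      have h2 : (T : Set C(spectrum ℝ a, ℝ))
          = (cfcHom ha) ⁻¹' {x | ∀ c ∈ ({b} : Set A), c * x = x * c} := rfl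
      rw [h2]
      have h3 : {x : A | ∀ c ∈ ({b} : Set A), c * x = x * c} = {x : A | b * x = x * b} := by
        ext x; simp
      rw [h3]
      exact (isClosed_eq (continuous_const.mul continuous_id)
        (continuous_id.mul continuous_const)).preimage (cfcHom_continuous ha)
    have hg : g ∈ (polynomialFunctions (spectrum ℝ a)).topologicalClosure := by
      rw [polynomialFunctions.topologicalClosure]; trivial
    exact (hmemT g).mp (Subalgebra.topologicalClosure_minimal hpoly hT_closed hg)
  · rw [cfc_apply_of_not_continuousOn a hf]
    exact Commute.zero_left b

lemma commute_sqrt {A : Type*} [CStarAlgebra A] [PartialOrder A] [StarOrderedRing A]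
    {a b : A} (ha : 0 ≤ a) (hab : Commute a b) : Commute (CFC.sqrt a) b := by
  rw [CFC.sqrt_eq_cfc, cfc_nnreal_eq_real _ a ha]
  exact commute_cfc_of_commute (.of_nonneg ha) hab _

lemma isUnit_of_isUnit_sq {M : Type*} [Monoid M] {a : M} (h : IsUnit (a * a)) : IsUnit a := by
  obtain ⟨u, hu⟩ := h
  have hc : Commute a ↑u := by
    rw [hu]; exact (Commute.refl a).mul_right (Commute.refl a)
  have hc' : Commute a ↑u⁻¹ := hc.units_inv_right
  refine isUnit_iff_exists.mpr ⟨a * ↑u⁻¹, ?_, ?_⟩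
  · rw [← mul_assoc, ← hu, Units.mul_inv]
  · rw [mul_assoc, ← hc'.eq, ← mul_assoc, ← hu, Units.mul_inv]

variable {H : Type*} [NormedAddCommGroup H] [InnerProductSpace ℂ H]
  [CompleteSpace H] [TopologicalSpace.SeparableSpace H]

/-- The absolute value `|A| = (A*A)^(1/2)` of a bounded operator. -/
noncomputable def absOp (A : H →L[ℂ] H) : H →L[ℂ] H := CFC.sqrt (star A * A)

/-- A symmetry is a self-adjoint unitary: `J = J* = J⁻¹`. -/
def IsSymmetry (J : H →L[ℂ] H) : Prop := IsSelfAdjoint J ∧ J * J = 1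

theorem stmt_2 (P : H →L[ℂ] H) (hP : P * P = P) :
    IsUnit (P + star P - 1) ∧
    ((2 : ℂ) • P - 1) * Ring.inverse (absOp ((2 : ℂ) • P - 1)) =
      (P + star P - 1) * Ring.inverse (absOp (P + star P - 1)) := by
  have hQ : star P * star P = star P := by rw [← star_mul, hP]
  set A : H →L[ℂ] H := (2 : ℂ) • P - 1 with hA
  set B : H →L[ℂ] H := P + star P - 1 with hB
  have hA2 : (2 : ℂ) • P = P + P := two_smul ℂ P
  have hAA : A * A = 1 := by
    rw [hA, hA2]
    simp only [mul_sub, sub_mul, mul_add, add_mul, mul_one, one_mul, hP]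
    abel
  have hstarA : star A = (2 : ℂ) • star P - 1 := by
    rw [hA]; simp [star_smul]
  have hstarB : star B = B := by
    rw [hB]; simp only [star_sub, star_add, star_star, star_one]; abel
  have e1 : A * B = B * star A := by
    rw [hstarA, hA, hB, hA2, two_smul ℂ (star P)]
    simp only [mul_sub, sub_mul, mul_add, add_mul, mul_one, one_mul, hP, hQ]
    abel
  have e2 : star A * B = B * A := by
    rw [hstarA, hA, hB, hA2, two_smul ℂ (star P)]
    simp only [mul_sub, sub_mul, mul_add, add_mul, mul_one, one_mul, hP, hQ]
    abel
  have hSpos : (0 : H →L[ℂ] H) ≤ B * A := by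
    have h3 : B * A = star P * P + star (1 - P) * (1 - P) := by
      rw [hA, hB, hA2]
      simp only [star_sub, star_one, mul_sub, sub_mul, mul_add, add_mul,
        mul_one, one_mul, hP, hQ]
      abel
    rw [h3]
    exact add_nonneg (star_mul_self_nonneg P) (star_mul_self_nonneg (1 - P))
  have hBB : B * B = 1 + star (P - star P) * (P - star P) := by
    rw [hB]
    simp only [star_sub, star_star, mul_sub, sub_mul, mul_add, add_mul,
      mul_one, one_mul, hP, hQ]
    abel
  -- invertibility
  have h01 : (0 : H →L[ℂ] H) ≤ 1 := by simpa only [star_one, one_mul] using star_mul_self_nonneg (1 : H →L[ℂ] H)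
  have hUnitBB : IsUnit (B * B) := by
    rw [hBB]
    exact CStarAlgebra.isUnit_of_le 1
      (le_add_of_nonneg_right (star_mul_self_nonneg _)) isStrictlyPositive_one
  have hUnitB : IsUnit B := isUnit_of_isUnit_sq hUnitBB
  have hUnitA : IsUnit A := isUnit_iff_exists.mpr ⟨A, hAA, hAA⟩
  refine ⟨hUnitB, ?_⟩
  -- positivity
  have hsA : (0 : H →L[ℂ] H) ≤ star A * A := star_mul_self_nonneg A
  have hsB : (0 : H →L[ℂ] H) ≤ B * B := by
    have := star_mul_self_nonneg B; rwa [hstarB] at this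
  -- commutation of star A * A and B * B
  have t2 : (B * B) * (star A * A) = (B * A) * (B * A) := by
    calc (B * B) * (star A * A) = B * (B * star A) * A := by noncomm_ring
    _ = B * (A * B) * A := by rw [← e1]
    _ = (B * A) * (B * A) := by noncomm_ring
  have t1 : (star A * A) * (B * B) = (B * A) * (B * A) := by
    calc (star A * A) * (B * B) = star A * (A * B) * B := by noncomm_ring
    _ = star A * (B * star A) * B := by rw [e1]
    _ = (star A * B) * (star A * B) := by noncomm_ring
    _ = (B * A) * (B * A) := by rw [e2]
  have c0 : Commute (star A * A) (B * B) := t1.trans t2.symm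
  have cA_sB : Commute (CFC.sqrt (star A * A)) (B * B) := commute_sqrt hsA c0
  have cBA : Commute (CFC.sqrt (B * B)) (CFC.sqrt (star A * A)) :=
    commute_sqrt hsB cA_sB.symm
  set α : H →L[ℂ] H := CFC.sqrt (star A * A) with hαdef
  set β : H →L[ℂ] H := CFC.sqrt (B * B) with hβdef
  have hα0 : (0 : H →L[ℂ] H) ≤ α := CFC.sqrt_nonneg _
  have hβ0 : (0 : H →L[ℂ] H) ≤ β := CFC.sqrt_nonneg _
  have hαα : α * α = star A * A := CFC.sqrt_mul_sqrt_self _ hsA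
  have hββ : β * β = B * B := CFC.sqrt_mul_sqrt_self _ hsB
  -- 0 ≤ β * α
  have hprod0 : (0 : H →L[ℂ] H) ≤ β * α := by
    set r : H →L[ℂ] H := CFC.sqrt α with hrdef
    have hr0 : (0 : H →L[ℂ] H) ≤ r := CFC.sqrt_nonneg _
    have hr : r * r = α := CFC.sqrt_mul_sqrt_self _ hα0
    have crβ : Commute r β := commute_sqrt hα0 cBA.symm
    have hstar_r : star r = r := (IsSelfAdjoint.of_nonneg hr0).star_eq
    have : β * α = star r * β * r := by
      rw [hstar_r]
      calc β * α = β * (r * r) := by rw [hr]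
      _ = (β * r) * r := by noncomm_ring
      _ = (r * β) * r := by rw [← crβ.eq]
      _ = r * β * r := by noncomm_ring
    rw [this]
    exact star_left_conjugate_nonneg hβ0 r
  -- the key polar identity  B * A = β * α
  have hS_eq : B * A = β * α := by
    have h1 : CFC.sqrt ((B * A) * (B * A)) = B * A := CFC.sqrt_mul_self _ hSpos
    have h2 : (β * α) * (β * α) = (B * A) * (B * A) := by
      calc (β * α) * (β * α) = β * (α * β) * α := by noncomm_ring
      _ = β * (β * α) * α := by rw [← cBA.eq]
      _ = (β * β) * (α * α) := by noncomm_ring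
      _ = (B * B) * (star A * A) := by rw [hαα, hββ]
      _ = (B * A) * (B * A) := t2
    have h3 : CFC.sqrt ((B * A) * (B * A)) = β * α := CFC.sqrt_unique h2 hprod0
    exact h1.symm.trans h3
  -- units
  have hUnitα : IsUnit α := isUnit_of_isUnit_sq (by rw [hαα]; exact hUnitA.star.mul hUnitA)
  have hUnitβ : IsUnit β := isUnit_of_isUnit_sq (by rw [hββ]; exact hUnitBB)
  obtain ⟨bu, hbu⟩ := hUnitB
  obtain ⟨au, hαu⟩ := hUnitα
  obtain ⟨be, hβu⟩ := hUnitβ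
  have habs1 : absOp A = α := by rw [absOp, hαdef]
  have habs2 : absOp B = β := by rw [absOp, hstarB, hβdef]
  rw [habs1, habs2, ← hαu, ← hβu, Ring.inverse_unit, Ring.inverse_unit]
  -- goal : A * ↑au⁻¹ = B * ↑be⁻¹
  rw [← hbu, ← hβu, ← hαu] at hS_eq
  have hAeq : A = ↑bu⁻¹ * (↑be * ↑au) := by
    rw [Units.eq_inv_mul_iff_mul_eq]; exact hS_eq
  have hb2 : (↑be : H →L[ℂ] H) * ↑be = ↑bu * ↑bu := by rw [hbu, hβu, hββ]
  calc A * ↑au⁻¹ = ↑bu⁻¹ * (↑be * ↑au) * ↑au⁻¹ := by rw [← hAeq]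
  _ = ↑bu⁻¹ * ↑be := by rw [mul_assoc, mul_assoc, Units.mul_inv, mul_one]
  _ = ↑bu⁻¹ * (↑be * ↑be) * ↑be⁻¹ := by rw [← mul_assoc, Units.mul_inv_cancel_right]
  _ = ↑bu⁻¹ * (↑bu * ↑bu) * ↑be⁻¹ := by rw [hb2]
  _ = ↑bu * ↑be⁻¹ := by rw [Units.inv_mul_cancel_left]
  _ = B * ↑be⁻¹ := by rw [hbu]
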